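/- (Converse under the cyclic assignment, Theorem 4.) In the distributed linearly separable computation model with the cyclic assignment, suppose the scheme is correct for a demand matrix F ∈ Matrix (Fin K_c) (Fin (K/N × ZMod N)) 𝔽_q such that rank(F) = K_c and, for every m ∈ ZMod N, the submatrix of F on the K/N columns {(p, m) : p ∈ Fin (K/N)} has rank min(K_c, K/N). Then for every A ⊆ ZMod N with |A| = N_r, the total answer length satisfies Σ_{n ∈ A} T_n ≥ max( N_r · min(K_c, K/N), K_c ) · L. -/

import Mathlib

open Matrix

lemma existsInj {𝔽 : Type} [Field 𝔽] {Kc : ℕ} {ι : Type} [Fintype ι] [DecidableEq ι]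
    (G : Matrix (Fin Kc) ι 𝔽) (r : ℕ) (hr : G.rank = r) :
    ∃ u : (Fin r → 𝔽) →ₗ[𝔽] (ι → 𝔽),
      Function.Injective (fun v => G.mulVec (u v)) := by
  have hfin : Module.finrank 𝔽 (LinearMap.range G.mulVecLin) = r := hr
  let b := Module.finBasisOfFinrankEq 𝔽 (LinearMap.range G.mulVecLin) hfin
  have hmem : ∀ i, ((b i : Fin Kc → 𝔽)) ∈ LinearMap.range G.mulVecLin := fun i => (b i).2
  choose pre hpre using hmem
  refine ⟨(Pi.basisFun 𝔽 (Fin r)).constr 𝔽 pre, ?_⟩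
  have key : ∀ v : Fin r → 𝔽, G.mulVec ((Pi.basisFun 𝔽 (Fin r)).constr 𝔽 pre v)
      = ∑ i, v i • ((b i : LinearMap.range G.mulVecLin) : Fin Kc → 𝔽) := by
    intro v
    rw [Module.Basis.constr_apply_fintype]
    simp only [Pi.basisFun_equivFun, LinearEquiv.refl_apply]
    have : G.mulVec (∑ i, v i • pre i) = G.mulVecLin (∑ i, v i • pre i) := rfl
    rw [this, map_sum]
    simp [hpre]
  intro v v' h
  simp only [key] at h
  have hli : LinearIndependent 𝔽
      (fun i => ((b i : LinearMap.range G.mulVecLin) : Fin Kc → 𝔽)) :=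
    b.linearIndependent.map' (Submodule.subtype _) (Submodule.ker_subtype _)
  have h0 : ∑ i, (v i - v' i) • ((b i : LinearMap.range G.mulVecLin) : Fin Kc → 𝔽) = 0 := by
    simp only [sub_smul, Finset.sum_sub_distrib, h, sub_self]
  have := Fintype.linearIndependent_iff.mp hli _ h0
  funext i
  exact sub_eq_zero.mp (this i)

/-- Converse under the cyclic assignment, Theorem 4: with the cyclic
assignment (worker `n ∈ ZMod N` gets the datasets `(p, m)` with `m ∈ {n, …, n + (N − N_r)}`),
if the scheme is correct for a demand matrix `F` of rank `K_c` whose `K/N`-column submatrices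
`{(p, m) : p}` all have rank `min(K_c, K/N)`, then for every set `A` of `N_r` workers,
`∑_{n ∈ A} T_n ≥ max( N_r · min(K_c, K/N), K_c ) · L`. -/
theorem stmt_5
    {𝔽 : Type} [Field 𝔽] [Fintype 𝔽]
    (K L N Nr Kc : ℕ) [NeZero N]
    (hK : 0 < K) (hL : 0 < L) (hNr : 0 < Nr) (hKcpos : 0 < Kc)
    (hNrN : Nr ≤ N) (hKcK : Kc ≤ K) (hNK : N ∣ K)
    (T : ZMod N → ℕ)
    (ψ : (n : ZMod N) → (Fin (K / N) × ZMod N → Fin L → 𝔽) → (Fin (T n) → 𝔽))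
    (hψ : ∀ (n : ZMod N) (W W' : Fin (K / N) × ZMod N → Fin L → 𝔽),
      (∀ c : Fin (K / N) × ZMod N,
        c.2 ∈ (Finset.range (N - Nr + 1)).image (fun j : ℕ => n + (j : ZMod N)) → W c = W' c) →
      ψ n W = ψ n W')
    (F : Matrix (Fin Kc) (Fin (K / N) × ZMod N) 𝔽)
    (hrankF : F.rank = Kc)
    (hrankcol : ∀ m : ZMod N,
      (F.submatrix id (fun p : Fin (K / N) => (p, m))).rank = min Kc (K / N))
    (hcor : ∀ A : Finset (ZMod N), A.card = Nr →
      ∃ φ : ((n : {m : ZMod N // m ∈ A}) → (Fin (T n.val) → 𝔽)) → Matrix (Fin Kc) (Fin L) 𝔽,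
        ∀ W : Fin (K / N) × ZMod N → Fin L → 𝔽,
          φ (fun n => ψ n.val W) = F * Matrix.of W) :
    ∀ A : Finset (ZMod N), A.card = Nr →
      max (Nr * min Kc (K / N)) Kc * L ≤ ∑ n ∈ A, T n := by
  intro A hA
  have hN : 0 < N := Nat.pos_of_ne_zero (NeZero.ne N)
  have hq : 1 < Fintype.card 𝔽 := Fintype.one_lt_card
  set r : ℕ := min Kc (K / N) with hrdef
  -- Bound 1: per-worker bound  r * L ≤ T n for every n ∈ A
  have bound1 : ∀ n : ZMod N, n ∈ A → r * L ≤ T n := by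
    intro n _
    obtain ⟨u, hu⟩ := existsInj (F.submatrix id (fun p : Fin (K / N) => (p, n))) r (hrankcol n)
    set S : Finset (ZMod N) :=
      (Finset.range (N - Nr + 1)).image (fun j : ℕ => n - (j : ZMod N)) with hSdef
    have hinjrange : ∀ j ∈ Finset.range (N - Nr + 1), ∀ j' ∈ Finset.range (N - Nr + 1),
        (j : ZMod N) = (j' : ZMod N) → j = j' := by
      intro j hj j' hj' hjj'
      have hjN : j < N := by
        have := Finset.mem_range.mp hj; omega
      have hj'N : j' < N := by
        have := Finset.mem_range.mp hj'; omega
      have := congrArg ZMod.val hjj'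
      rwa [ZMod.val_natCast_of_lt hjN, ZMod.val_natCast_of_lt hj'N] at this
    have hScard : S.card = N - Nr + 1 := by
      rw [hSdef, Finset.card_image_of_injOn, Finset.card_range]
      intro j hj j' hj' hjj'
      exact hinjrange j hj j' hj' (by
        have : n - (j : ZMod N) = n - (j' : ZMod N) := hjj'
        have := sub_right_injective this
        exact this)
    have hnS : n ∈ S := by
      refine Finset.mem_image.mpr ⟨0, Finset.mem_range.mpr (by omega), by simp⟩
    set A' : Finset (ZMod N) := insert n (Finset.univ \ S) with hA'def
    have hA'card : A'.card = Nr := by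
      have hnotin : n ∉ Finset.univ \ S := by simp [hnS]
      rw [hA'def, Finset.card_insert_of_notMem hnotin,
        Finset.card_sdiff_of_subset (Finset.subset_univ S), hScard, Finset.card_univ, ZMod.card]
      omega
    obtain ⟨φ, hφ⟩ := hcor A' hA'card
    set WC : (Fin r → Fin L → 𝔽) → (Fin (K / N) × ZMod N → Fin L → 𝔽) :=
      fun C pc l => if pc.2 = n then u (fun i => C i l) pc.1 else 0 with hWCdef
    have hcomp : ∀ (C : Fin r → Fin L → 𝔽) (i : Fin Kc) (l : Fin L),
        (F * Matrix.of (WC C)) i l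
          = (F.submatrix id (fun p : Fin (K / N) => (p, n))).mulVec (u (fun i => C i l)) i := by
      intro C i l
      simp only [Matrix.mul_apply, Matrix.of_apply, Matrix.mulVec, dotProduct,
        Matrix.submatrix_apply, id_eq]
      rw [Fintype.sum_prod_type]
      refine Finset.sum_congr rfl (fun p _ => ?_)
      simp [hWCdef, mul_ite, Finset.sum_ite_eq']
    have hinj : Function.Injective (fun C => ψ n (WC C)) := by
      intro C C' hCC'
      simp only at hCC'
      have hans : (fun w : {x : ZMod N // x ∈ A'} => ψ w.val (WC C))
          = fun w : {x : ZMod N // x ∈ A'} => ψ w.val (WC C') := by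
        funext w
        by_cases hw : (w : ZMod N) = n
        · rw [hw]; exact hCC'
        · apply hψ
          intro c hc
          have hwS : (w : ZMod N) ∉ S := by
            have hwA' : (w : ZMod N) ∈ A' := w.2
            rcases Finset.mem_insert.mp hwA' with h | h
            · exact absurd h hw
            · exact (Finset.mem_sdiff.mp h).2
          have hc2 : c.2 ≠ n := by
            intro h2
            apply hwS
            obtain ⟨j, hj, hjw⟩ := Finset.mem_image.mp hc
            refine Finset.mem_image.mpr ⟨j, hj, ?_⟩
            have : (w : ZMod N) + (j : ZMod N) = n := by rw [hjw, h2]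
            exact (eq_sub_of_add_eq this).symm
          simp [hWCdef, hc2]
      have hFW : F * Matrix.of (WC C) = F * Matrix.of (WC C') := by
        rw [← hφ, ← hφ, hans]
      funext i l
      have hcol : (F.submatrix id (fun p : Fin (K / N) => (p, n))).mulVec (u (fun i => C i l))
          = (F.submatrix id (fun p : Fin (K / N) => (p, n))).mulVec (u (fun i => C' i l)) := by
        funext i'
        rw [← hcomp C i' l, ← hcomp C' i' l, hFW]
      have := congrFun (hu hcol) i
      exact this
    have hcard := Fintype.card_le_of_injective _ hinj
    have hc1 : Fintype.card (Fin r → Fin L → 𝔽) = Fintype.card 𝔽 ^ (r * L) := by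
      simp only [Fintype.card_fun, Fintype.card_fin]
      rw [← pow_mul, mul_comm]
    have hc2 : Fintype.card (Fin (T n) → 𝔽) = Fintype.card 𝔽 ^ T n := by
      simp [Fintype.card_fun]
    rw [hc1, hc2] at hcard
    exact (Nat.pow_le_pow_iff_right hq).mp hcard
  -- Bound 2: Kc * L ≤ ∑ T n
  have bound2 : Kc * L ≤ ∑ n ∈ A, T n := by
    obtain ⟨u, hu⟩ := existsInj F Kc hrankF
    obtain ⟨φ, hφ⟩ := hcor A hA
    set W2 : (Fin Kc → Fin L → 𝔽) → (Fin (K / N) × ZMod N → Fin L → 𝔽) :=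
      fun C j l => u (fun i => C i l) j with hW2def
    have hcomp : ∀ (C : Fin Kc → Fin L → 𝔽) (i : Fin Kc) (l : Fin L),
        (F * Matrix.of (W2 C)) i l = F.mulVec (u (fun i => C i l)) i := by
      intro C i l
      simp [Matrix.mul_apply, Matrix.mulVec, dotProduct, hW2def]
    have hinj : Function.Injective
        (fun C => (fun w : {x : ZMod N // x ∈ A} => ψ w.val (W2 C))) := by
      intro C C' hCC'
      have hFW : F * Matrix.of (W2 C) = F * Matrix.of (W2 C') := by
        rw [← hφ, ← hφ]
        exact congrArg φ hCC'
      funext i l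
      have hcol : F.mulVec (u (fun i => C i l)) = F.mulVec (u (fun i => C' i l)) := by
        funext i'
        rw [← hcomp C i' l, ← hcomp C' i' l, hFW]
      exact congrFun (hu hcol) i
    have hcard := Fintype.card_le_of_injective _ hinj
    have hc1 : Fintype.card (Fin Kc → Fin L → 𝔽) = Fintype.card 𝔽 ^ (Kc * L) := by
      simp only [Fintype.card_fun, Fintype.card_fin]
      rw [← pow_mul, mul_comm]
    have hc2 : Fintype.card ((w : {x : ZMod N // x ∈ A}) → Fin (T w.val) → 𝔽)
        = Fintype.card 𝔽 ^ ∑ n ∈ A, T n := by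
      rw [Fintype.card_pi]
      have : ∀ w : {x : ZMod N // x ∈ A},
          Fintype.card (Fin (T w.val) → 𝔽) = Fintype.card 𝔽 ^ T w.val := by
        intro w; simp [Fintype.card_fun]
      rw [Finset.prod_congr rfl (fun w _ => this w), Finset.prod_pow_eq_pow_sum]
      congr 1
      exact Finset.sum_coe_sort A T
    rw [hc1, hc2] at hcard
    exact (Nat.pow_le_pow_iff_right hq).mp hcard
  have sum1 : Nr * r * L ≤ ∑ n ∈ A, T n := by
    calc Nr * r * L = ∑ _n ∈ A, r * L := by
          rw [Finset.sum_const, hA, smul_eq_mul, mul_assoc]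
      _ ≤ ∑ n ∈ A, T n := Finset.sum_le_sum bound1
  rcases max_cases (Nr * r) Kc with ⟨h1, -⟩ | ⟨h1, -⟩ <;> rw [h1]
  · exact sum1
  · exact bound2
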